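/- Let β : [τ₀, ∞) → ℝ be C¹ with β(τ) → 0 as τ → ∞ and satisfying β'(τ) = β(τ) + O(τ^{-1}) (i.e. |β'(τ) − β(τ)| ≤ C/τ for all τ ≥ τ₀). Then |β(τ)| ≤ C'/τ for all τ ≥ τ₀, for some constant C' depending only on C and τ₀. -/

import Mathlib

open Real Filter

/-- Backward integration of an exponentially unstable ODE: if `β` is `C¹` on
`[τ₀,∞)` with `β(τ) → 0` as `τ → ∞` and `|β'(τ) − β(τ)| ≤ C/τ`, then
`|β(τ)| ≤ C'/τ` for all `τ ≥ τ₀`, with `C'` depending only on `C` and `τ₀`. -/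
theorem backward_ode_integration (τ₀ C : ℝ) (hτ₀ : 0 < τ₀) (hC : 0 < C) :
    ∃ C' : ℝ, 0 < C' ∧ ∀ β β' : ℝ → ℝ,
      (∀ τ : ℝ, τ₀ ≤ τ → HasDerivAt β (β' τ) τ) →
      ContinuousOn β' (Set.Ici τ₀) →
      Tendsto β atTop (nhds 0) →
      (∀ τ : ℝ, τ₀ ≤ τ → |β' τ - β τ| ≤ C / τ) →
      ∀ τ : ℝ, τ₀ ≤ τ → |β τ| ≤ C' / τ := by
  refine ⟨C, hC, ?_⟩
  intro β β' hderiv hcont hlim hbound τ hτ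
  have hτpos : 0 < τ := hτ₀.trans_le hτ
  set g : ℝ → ℝ := fun s => Real.exp (-s) * β s with hg
  have hgd : ∀ s ∈ Set.Ici τ₀, HasDerivAt g (Real.exp (-s) * (β' s - β s)) s := by
    intro s hs
    have h1 : HasDerivAt (fun u : ℝ => Real.exp (-u)) (-Real.exp (-s)) s := by
      simpa [Function.comp_def] using ((Real.hasDerivAt_exp (-s)).comp s (hasDerivAt_neg s))
    have h2 := h1.mul (hderiv s hs)
    exact h2.congr_deriv (by ring)
  have key : ∀ T, τ ≤ T → |g τ| ≤ |g T| + C / τ * Real.exp (-τ) := by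
    intro T hT
    have hsub : Set.uIcc τ T ⊆ Set.Ici τ₀ := by
      rw [Set.uIcc_of_le hT]
      exact fun x hx => (hτ.trans hx.1)
    have hcontβ : ContinuousOn β (Set.uIcc τ T) := fun x hx =>
      ((hderiv x (hsub hx)).continuousAt).continuousWithinAt
    have hftc : ∫ s in τ..T, Real.exp (-s) * (β' s - β s) = g T - g τ := by
      apply intervalIntegral.integral_eq_sub_of_hasDerivAt
      · intro s hs; exact hgd s (hsub hs)
      · apply ContinuousOn.intervalIntegrable
        exact ((Real.continuous_exp.comp continuous_neg).continuousOn).mul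
          ((hcont.mono hsub).sub hcontβ)
    have hbnd : |∫ s in τ..T, Real.exp (-s) * (β' s - β s)|
        ≤ C / τ * (Real.exp (-τ) - Real.exp (-T)) := by
      have hint : ∫ s in τ..T, C / τ * Real.exp (-s)
          = C / τ * (Real.exp (-τ) - Real.exp (-T)) := by
        have : ∫ s in τ..T, C / τ * Real.exp (-s)
            = (fun s => -(C / τ) * Real.exp (-s)) T - (fun s => -(C / τ) * Real.exp (-s)) τ := by
          apply intervalIntegral.integral_eq_sub_of_hasDerivAt
          · intro s hs
            have h1 : HasDerivAt (fun u : ℝ => Real.exp (-u)) (-Real.exp (-s)) s := by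
              simpa [Function.comp_def] using ((Real.hasDerivAt_exp (-s)).comp s (hasDerivAt_neg s))
            have := h1.const_mul (-(C / τ))
            exact this.congr_deriv (by ring)
          · apply ContinuousOn.intervalIntegrable
            exact continuousOn_const.mul (Real.continuous_exp.comp continuous_neg).continuousOn
        rw [this]; ring
      calc |∫ s in τ..T, Real.exp (-s) * (β' s - β s)|
          ≤ |∫ s in τ..T, C / τ * Real.exp (-s)| := by
            rw [← Real.norm_eq_abs (∫ s in τ..T, Real.exp (-s) * (β' s - β s))]
            apply intervalIntegral.norm_integral_le_abs_of_norm_le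
            · filter_upwards [MeasureTheory.ae_restrict_mem measurableSet_uIoc] with s hs
              rw [Set.uIoc_of_le hT] at hs
              have hsτ : τ ≤ s := le_of_lt hs.1
              have hs₀ : τ₀ ≤ s := hτ.trans hsτ
              have : |Real.exp (-s) * (β' s - β s)| = Real.exp (-s) * |β' s - β s| := by
                rw [abs_mul, abs_of_pos (Real.exp_pos _)]
              rw [Real.norm_eq_abs, this]
              have h1 : |β' s - β s| ≤ C / s := hbound s hs₀
              have h2 : C / s ≤ C / τ := by
                apply div_le_div_of_nonneg_left hC.le hτpos hsτ
              calc Real.exp (-s) * |β' s - β s| ≤ Real.exp (-s) * (C / τ) :=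
                    mul_le_mul_of_nonneg_left (h1.trans h2) (Real.exp_pos _).le
                _ = C / τ * Real.exp (-s) := by ring
            · apply ContinuousOn.intervalIntegrable
              exact continuousOn_const.mul (Real.continuous_exp.comp continuous_neg).continuousOn
        _ = C / τ * (Real.exp (-τ) - Real.exp (-T)) := by
            rw [hint, abs_of_nonneg]
            apply mul_nonneg (div_nonneg hC.le hτpos.le)
            simp [Real.exp_le_exp, hT]
    have hE : C / τ * (Real.exp (-τ) - Real.exp (-T)) ≤ C / τ * Real.exp (-τ) := by
      apply mul_le_mul_of_nonneg_left _ (div_nonneg hC.le hτpos.le)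
      have := (Real.exp_pos (-T)).le
      linarith
    have : |g τ| ≤ |g T| + |g T - g τ| := by
      have := abs_sub_abs_le_abs_sub (g τ) (g T)
      have h := abs_sub_comm (g τ) (g T)
      linarith [abs_sub_abs_le_abs_sub (g τ) (g T), (abs_sub_comm (g τ) (g T)).le]
    rw [← hftc] at this
    linarith [hbnd.trans hE]
  -- take T → ∞
  have hgl : Tendsto (fun T => |g T| + C / τ * Real.exp (-τ)) atTop
      (nhds (0 + C / τ * Real.exp (-τ))) := by
    apply Tendsto.add_const
    have : Tendsto g atTop (nhds (0 * 0)) :=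
      (Real.tendsto_exp_neg_atTop_nhds_zero).mul hlim
    simpa using (this.abs.congr' (by simp))
  have hfin : |g τ| ≤ 0 + C / τ * Real.exp (-τ) := by
    apply ge_of_tendsto hgl
    filter_upwards [eventually_ge_atTop τ] with T hT using key T hT
  rw [zero_add] at hfin
  have : Real.exp (-τ) * |β τ| ≤ C / τ * Real.exp (-τ) := by
    have : |g τ| = Real.exp (-τ) * |β τ| := by
      rw [hg]; simp [abs_mul, abs_of_pos (Real.exp_pos _)]
    linarith [hfin, this.symm.le, this.le]
  have hexp := Real.exp_pos (-τ)
  nlinarith [abs_nonneg (β τ)]
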